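/- For all positive integers m and n, the total number of subgroups of ℤ_m × ℤ_n equals Σ_{d ∣ gcd(m,n)} φ(d)·τ(m/d)·τ(n/d). -/

import Mathlib

open AddSubgroup Finset

def hnfLat (a b c : ℕ) : AddSubgroup (ℤ × ℤ) where
  carrier := {p | (a:ℤ) ∣ p.1 ∧ ((a:ℤ)*b) ∣ (a:ℤ)*p.2 - p.1*c}
  zero_mem' := by simp
  add_mem' := by
    rintro p q ⟨h1, h2⟩ ⟨h3, h4⟩
    refine ⟨dvd_add h1 h3, ?_⟩
    have := dvd_add h2 h4
    convert this using 1
    · rfl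
    simp [Prod.fst_add, Prod.snd_add]
    ring
  neg_mem' := by
    rintro p ⟨h1, h2⟩
    refine ⟨h1.neg_right, ?_⟩
    have := h2.neg_right
    convert this using 1
    · rfl
    simp
    ring

lemma mem_hnfLat {a b c : ℕ} {p : ℤ × ℤ} :
    p ∈ hnfLat a b c ↔ (a:ℤ) ∣ p.1 ∧ ((a:ℤ)*b) ∣ (a:ℤ)*p.2 - p.1*c := Iff.rfl

lemma gen1_mem (a b c : ℕ) : ((a:ℤ), (c:ℤ)) ∈ hnfLat a b c := by
  refine ⟨dvd_refl _, ?_⟩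
  simp [mul_comm]

lemma gen2_mem (a b c : ℕ) : ((0:ℤ), (b:ℤ)) ∈ hnfLat a b c := by
  refine ⟨dvd_zero _, ?_⟩
  simp

lemma hnfLat_inj {a b c a' b' c' : ℕ} (ha : 0 < a) (hb : 0 < b) (ha' : 0 < a') (hb' : 0 < b')
    (hc : c < b) (hc' : c' < b') (h : hnfLat a b c = hnfLat a' b' c') :
    a = a' ∧ b = b' ∧ c = c' := by
  have h1 := gen1_mem a b c; rw [h, mem_hnfLat] at h1
  have h1' := gen1_mem a' b' c'; rw [← h, mem_hnfLat] at h1'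
  have h2 := gen2_mem a b c; rw [h, mem_hnfLat] at h2
  have h2' := gen2_mem a' b' c'; rw [← h, mem_hnfLat] at h2'
  have haa : a = a' := by
    have d1 : (a':ℤ) ∣ (a:ℤ) := h1.1
    have d2 : (a:ℤ) ∣ (a':ℤ) := h1'.1
    exact_mod_cast dvd_antisymm (by exact_mod_cast d2) (by exact_mod_cast d1)
  subst haa
  have hbb : b = b' := by
    have d1 : ((a:ℤ)*b') ∣ (a:ℤ)*b := by simpa using h2.2
    have d2 : ((a:ℤ)*b) ∣ (a:ℤ)*b' := by simpa using h2'.2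
    have ha0 : (a:ℤ) ≠ 0 := by exact_mod_cast ha.ne'
    rw [mul_dvd_mul_iff_left ha0] at d1 d2
    exact_mod_cast dvd_antisymm (by exact_mod_cast d2) (by exact_mod_cast d1)
  subst hbb
  refine ⟨rfl, rfl, ?_⟩
  have d1 : ((a:ℤ)*b) ∣ (a:ℤ)*c - (a:ℤ)*c' := h1.2
  have ha0 : (a:ℤ) ≠ 0 := by exact_mod_cast ha.ne'
  rw [← mul_sub, mul_dvd_mul_iff_left ha0] at d1
  have : (c:ℤ) - c' = 0 := by
    refine Int.eq_zero_of_abs_lt_dvd d1 ?_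
    rw [abs_sub_lt_iff]
    constructor <;> [skip; skip] <;> push_cast <;> omega
  have : (c:ℤ) = c' := by linarith
  exact_mod_cast this

lemma int_subgroup_nat (H : AddSubgroup ℤ) : ∃ a : ℕ, ∀ x : ℤ, x ∈ H ↔ (a:ℤ) ∣ x := by
  obtain ⟨g, hg⟩ := Int.subgroup_cyclic H
  refine ⟨g.natAbs, fun x => ?_⟩
  rw [hg, AddSubgroup.mem_closure_singleton, Int.natAbs_dvd]
  exact ⟨fun ⟨n, h⟩ => Dvd.intro_left n (by rw [← h, zsmul_eq_mul, Int.cast_id]),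
    fun ⟨n, h⟩ => ⟨n, by rw [zsmul_eq_mul, Int.cast_id, h]; ring⟩⟩

lemma exists_hnf {m n : ℕ} (hm : 0 < m) (hn : 0 < n) (L : AddSubgroup (ℤ × ℤ))
    (hmL : ((m:ℤ), (0:ℤ)) ∈ L) (hnL : ((0:ℤ), (n:ℤ)) ∈ L) :
    ∃ a b c : ℕ, a ∣ m ∧ b ∣ n ∧ c < b ∧ b ∣ (m/a)*c ∧ L = hnfLat a b c := by
  obtain ⟨a, hA⟩ := int_subgroup_nat (L.map (AddMonoidHom.fst ℤ ℤ))
  obtain ⟨b, hB⟩ := int_subgroup_nat (L.comap (AddMonoidHom.inr ℤ ℤ))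
  have hAmem : ∀ x : ℤ, (∃ y, (x, y) ∈ L) ↔ (a:ℤ) ∣ x := by
    intro x
    rw [← hA]
    simp only [AddSubgroup.mem_map]
    constructor
    · rintro ⟨y, hy⟩; exact ⟨(x, y), hy, rfl⟩
    · rintro ⟨⟨x', y⟩, hy, rfl⟩; exact ⟨y, hy⟩
  have hBmem : ∀ y : ℤ, ((0:ℤ), y) ∈ L ↔ (b:ℤ) ∣ y := by
    intro y; rw [← hB]; rfl
  have ham : a ∣ m := by
    have := (hAmem m).1 ⟨0, hmL⟩
    exact_mod_cast this
  have hbn : b ∣ n := by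
    have := (hBmem n).1 hnL
    exact_mod_cast this
  have ha0 : 0 < a := Nat.pos_of_dvd_of_pos ham hm
  have hb0 : 0 < b := Nat.pos_of_dvd_of_pos hbn hn
  have haZ : (a:ℤ) ≠ 0 := by exact_mod_cast ha0.ne'
  have hbZ : (b:ℤ) ≠ 0 := by exact_mod_cast hb0.ne'
  obtain ⟨c₀, hc₀⟩ := (hAmem a).2 dvd_rfl
  set c₁ : ℤ := c₀ % b with hc₁def
  have hc₁0 : 0 ≤ c₁ := Int.emod_nonneg c₀ hbZ
  have hc₁b : c₁ < b := Int.emod_lt_of_pos c₀ (by exact_mod_cast hb0)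
  set c : ℕ := c₁.toNat with hcdef
  have hcc : (c:ℤ) = c₁ := Int.toNat_of_nonneg hc₁0
  have hcb : c < b := by omega
  -- (a, c) ∈ L
  have hsub : ((0:ℤ), c₀ - c₁) ∈ L := (hBmem _).2 ⟨c₀ / b, by rw [hc₁def]; rw [Int.emod_def]; ring⟩
  have hac : ((a:ℤ), (c:ℤ)) ∈ L := by
    have := L.sub_mem hc₀ hsub
    simpa [hcc, Prod.ext_iff] using this
  have hb' : ∀ k : ℤ, ((0:ℤ), (b:ℤ)*k) ∈ L := fun k => (hBmem _).2 ⟨k, rfl⟩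
  have hLeq : L = hnfLat a b c := by
    ext p
    rw [mem_hnfLat]
    constructor
    · intro hp
      obtain ⟨k, hk⟩ := (hAmem p.1).1 ⟨p.2, by rwa [Prod.mk.eta]⟩
      have h2 : ((0:ℤ), p.2 - k * c) ∈ L := by
        have h3 := L.sub_mem hp (L.zsmul_mem hac k)
        have he : p - k • ((a:ℤ), (c:ℤ)) = ((0:ℤ), p.2 - k * c) := by
          simp [Prod.ext_iff, smul_eq_mul, hk]; ring
        rwa [he] at h3
      obtain ⟨l, hl⟩ := (hBmem _).1 h2
      exact ⟨⟨k, hk⟩, ⟨l, by rw [hk]; linear_combination (a:ℤ) * hl⟩⟩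
    · rintro ⟨⟨k, hk⟩, ⟨l, hl⟩⟩
      have hp2 : p.2 = k * c + l * b := by
        have h0 : (a:ℤ) * (p.2 - k * c - l * b) = 0 := by
          linear_combination hl + (c:ℤ) * hk
        rcases mul_eq_zero.1 h0 with h | h
        · exact absurd h haZ
        · linarith
      have hpe : p = k • ((a:ℤ), (c:ℤ)) + l • ((0:ℤ), (b:ℤ)) := by
        simp [Prod.ext_iff, smul_eq_mul, hk, hp2]; ring
      rw [hpe]
      exact L.add_mem (L.zsmul_mem hac k) (L.zsmul_mem ((hBmem b).2 dvd_rfl) l)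
  refine ⟨a, b, c, ham, hbn, hcb, ?_, hLeq⟩
  have hmmem := hmL
  rw [hLeq, mem_hnfLat] at hmmem
  obtain ⟨-, l, hl⟩ := hmmem
  have hl' : (a:ℤ) * (0:ℤ) - (m:ℤ) * c = (a:ℤ) * (b:ℤ) * l := hl
  have hma : (m:ℤ) = (a:ℤ) * ((m/a : ℕ):ℤ) := by
    rw [← Nat.cast_mul, Nat.mul_div_cancel' ham]
  have key : (a:ℤ) * (((m/a : ℕ):ℤ) * c + (b:ℤ) * l) = 0 := by
    linear_combination -hl' - (c:ℤ) * hma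
  have hdvd : (b:ℤ) ∣ ((m/a : ℕ):ℤ) * c := by
    rcases mul_eq_zero.1 key with h | h
    · exact absurd h haZ
    · exact ⟨-l, by linarith⟩
  exact_mod_cast hdvd

def projMN (m n : ℕ) : ℤ × ℤ →+ ZMod m × ZMod n :=
  (Int.castAddHom (ZMod m)).prodMap (Int.castAddHom (ZMod n))

lemma projMN_surj (m n : ℕ) : Function.Surjective (projMN m n) := by
  intro p
  obtain ⟨x, hx⟩ := ZMod.intCast_surjective (n := m) p.1
  obtain ⟨y, hy⟩ := ZMod.intCast_surjective (n := n) p.2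
  exact ⟨(x, y), Prod.ext hx hy⟩

lemma mem_ker_projMN {m n : ℕ} {p : ℤ × ℤ} :
    p ∈ (projMN m n).ker ↔ (m:ℤ) ∣ p.1 ∧ (n:ℤ) ∣ p.2 := by
  have hrfl : (projMN m n) p = ((p.1 : ZMod m), (p.2 : ZMod n)) := rfl
  rw [AddMonoidHom.mem_ker, hrfl, Prod.mk.injEq, Prod.fst_zero, Prod.snd_zero,
    ZMod.intCast_zmod_eq_zero_iff_dvd, ZMod.intCast_zmod_eq_zero_iff_dvd]

def Good (m n : ℕ) (t : ℕ × ℕ × ℕ) : Prop :=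
  t.1 ∣ m ∧ t.2.1 ∣ n ∧ t.2.2 < t.2.1 ∧ t.2.1 ∣ (m / t.1) * t.2.2

lemma ker_le_hnfLat {m n : ℕ} {t : ℕ × ℕ × ℕ} (h : Good m n t) :
    (projMN m n).ker ≤ hnfLat t.1 t.2.1 t.2.2 := by
  obtain ⟨a, b, c⟩ := t
  obtain ⟨ham, hbn, hcb, hdvd⟩ := h
  intro p hp
  rw [mem_ker_projMN] at hp
  obtain ⟨hp1, hp2⟩ := hp
  refine ⟨dvd_trans (by exact_mod_cast Int.natCast_dvd_natCast.2 ham) hp1, ?_⟩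
  refine dvd_sub ?_ ?_
  · exact mul_dvd_mul_left _ (dvd_trans (by exact_mod_cast hbn) hp2)
  · have h1 : ((a:ℤ)*b) ∣ (m:ℤ) * c := by
      have : (a:ℤ) * ((m/a : ℕ) * c : ℕ) = (m:ℤ) * c := by
        rw [Nat.cast_mul, ← mul_assoc, ← Nat.cast_mul, Nat.mul_div_cancel' ham]
      rw [← this]
      exact mul_dvd_mul_left _ (by exact_mod_cast hdvd)
    exact dvd_trans h1 (mul_dvd_mul_right hp1 _)

noncomputable def latMap (m n : ℕ) (t : {t : ℕ × ℕ × ℕ // Good m n t}) :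
    AddSubgroup (ZMod m × ZMod n) :=
  AddSubgroup.map (projMN m n) (hnfLat t.1.1 t.1.2.1 t.1.2.2)

lemma latMap_bijective (m n : ℕ) (hm : 0 < m) (hn : 0 < n) :
    Function.Bijective (latMap m n) := by
  constructor
  · rintro ⟨⟨a, b, c⟩, hg⟩ ⟨⟨a', b', c'⟩, hg'⟩ h
    have h2 : hnfLat a b c = hnfLat a' b' c' := by
      have e1 := congrArg (AddSubgroup.comap (projMN m n)) h
      rwa [latMap, latMap, AddSubgroup.comap_map_eq, AddSubgroup.comap_map_eq,
        sup_eq_left.2 (ker_le_hnfLat hg), sup_eq_left.2 (ker_le_hnfLat hg')] at e1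
    have ha0 : 0 < a := Nat.pos_of_dvd_of_pos hg.1 hm
    have ha0' : 0 < a' := Nat.pos_of_dvd_of_pos hg'.1 hm
    have hb0 : 0 < b := Nat.pos_of_dvd_of_pos hg.2.1 hn
    have hb0' : 0 < b' := Nat.pos_of_dvd_of_pos hg'.2.1 hn
    obtain ⟨e1, e2, e3⟩ := hnfLat_inj ha0 hb0 ha0' hb0' hg.2.2.1 hg'.2.2.1 h2
    have e3' : c = c' := e3
    subst e1; subst e2; subst e3'
    rfl
  · intro S
    set L := AddSubgroup.comap (projMN m n) S with hL
    have hmL : ((m:ℤ), (0:ℤ)) ∈ L := by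
      have : ((m:ℤ), (0:ℤ)) ∈ (projMN m n).ker := by
        rw [mem_ker_projMN]; exact ⟨dvd_refl _, dvd_zero _⟩
      rw [hL]
      simp only [AddSubgroup.mem_comap]
      rw [AddMonoidHom.mem_ker] at this
      rw [this]; exact S.zero_mem
    have hnL : ((0:ℤ), (n:ℤ)) ∈ L := by
      have : ((0:ℤ), (n:ℤ)) ∈ (projMN m n).ker := by
        rw [mem_ker_projMN]; exact ⟨dvd_zero _, dvd_refl _⟩
      rw [AddMonoidHom.mem_ker] at this
      simp only [hL, AddSubgroup.mem_comap, this]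
      exact S.zero_mem
    obtain ⟨a, b, c, ham, hbn, hcb, hdvd, hLeq⟩ := exists_hnf hm hn L hmL hnL
    refine ⟨⟨(a, b, c), ham, hbn, hcb, hdvd⟩, ?_⟩
    rw [latMap]
    show AddSubgroup.map (projMN m n) (hnfLat a b c) = S
    rw [← hLeq, hL, AddSubgroup.map_comap_eq_self_of_surjective (projMN_surj m n)]

def Tset (m n : ℕ) : Finset (ℕ × ℕ × ℕ) :=
  (m.divisors ×ˢ n.divisors ×ˢ Finset.range n).filter
    fun t => t.2.2 < t.2.1 ∧ t.2.1 ∣ (m / t.1) * t.2.2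

lemma good_iff_mem {m n : ℕ} (hm : 0 < m) (hn : 0 < n) (t : ℕ × ℕ × ℕ) :
    Good m n t ↔ t ∈ Tset m n := by
  obtain ⟨a, b, c⟩ := t
  simp only [Tset, Good, Finset.mem_filter, Finset.mem_product, Nat.mem_divisors,
    Finset.mem_range]
  constructor
  · rintro ⟨h1, h2, h3, h4⟩
    exact ⟨⟨⟨h1, hm.ne'⟩, ⟨h2, hn.ne'⟩, lt_of_lt_of_le h3 (Nat.le_of_dvd hn h2)⟩, h3, h4⟩
  · rintro ⟨⟨⟨h1, -⟩, ⟨h2, -⟩, -⟩, h3, h4⟩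
    exact ⟨h1, h2, h3, h4⟩

lemma card_eq_Tset (m n : ℕ) (hm : 0 < m) (hn : 0 < n) :
    Nat.card (AddSubgroup (ZMod m × ZMod n)) = (Tset m n).card := by
  rw [← Nat.card_eq_of_bijective _ (latMap_bijective m n hm hn)]
  rw [Nat.card_congr (Equiv.subtypeEquivRight (good_iff_mem hm hn))]
  simp [Nat.card_eq_fintype_card]

lemma count_multiples {e g : ℕ} (he : 0 < e) :
    ((Finset.range (e * g)).filter fun c => e ∣ c).card = g := by
  have himg : (Finset.range (e * g)).filter (fun c => e ∣ c) =
      (Finset.range g).image (fun i => e * i) := by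
    ext x
    simp only [Finset.mem_filter, Finset.mem_range, Finset.mem_image]
    constructor
    · rintro ⟨hlt, j, rfl⟩
      exact ⟨j, Nat.lt_of_mul_lt_mul_left hlt, rfl⟩
    · rintro ⟨i, hi, rfl⟩
      exact ⟨mul_lt_mul_of_pos_left hi he, ⟨i, rfl⟩⟩
  rw [himg, Finset.card_image_of_injective _ (fun i j h => Nat.eq_of_mul_eq_mul_left he h),
    Finset.card_range]

lemma count_c {k b : ℕ} (hb : 0 < b) :
    ((Finset.range b).filter fun c => b ∣ k * c).card = Nat.gcd k b := by
  set g := Nat.gcd k b with hg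
  have hg0 : 0 < g := Nat.gcd_pos_of_pos_right k hb
  set e := b / g with he
  have heb : e * g = b := Nat.div_mul_cancel (Nat.gcd_dvd_right k b)
  have he0 : 0 < e := Nat.div_pos (Nat.le_of_dvd hb (Nat.gcd_dvd_right k b)) hg0
  obtain ⟨k', hk'⟩ := Nat.gcd_dvd_left k b
  have hk2 : k / g = k' := by rw [hk', Nat.mul_div_cancel_left _ hg0]
  have hco : Nat.Coprime e k' := by
    have h := (Nat.coprime_div_gcd_div_gcd (m := k) (n := b) hg0).symm
    rwa [hk2] at h
  have hiff : ∀ c ∈ Finset.range b, (b ∣ k * c ↔ e ∣ c) := by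
    intro c _
    constructor
    · intro hd
      have h1 : e * g ∣ k' * c * g := by
        rw [heb]
        have : k * c = k' * c * g := by rw [hk']; ring
        rwa [this] at hd
      rw [Nat.mul_dvd_mul_iff_right hg0] at h1
      exact hco.dvd_of_dvd_mul_left h1
    · rintro ⟨j, rfl⟩
      exact ⟨k' * j, by rw [← heb, hk', ← hg]; ring⟩
  rw [Finset.filter_congr hiff, ← heb, count_multiples he0]

lemma Tset_card (m n : ℕ) (hm : 0 < m) (hn : 0 < n) :
    (Tset m n).card = ∑ a ∈ m.divisors, ∑ b ∈ n.divisors, Nat.gcd (m / a) b := by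
  rw [Tset, Finset.card_filter, Finset.sum_product]
  refine Finset.sum_congr rfl fun a ha => ?_
  rw [Finset.sum_product]
  refine Finset.sum_congr rfl fun b hb => ?_
  obtain ⟨hbn, -⟩ := Nat.mem_divisors.1 hb
  have hb0 : 0 < b := Nat.pos_of_dvd_of_pos hbn hn
  have hbn' : b ≤ n := Nat.le_of_dvd hn hbn
  rw [← Finset.card_filter]
  have heq : (Finset.range n).filter (fun c => c < b ∧ b ∣ (m / a) * c)
      = (Finset.range b).filter (fun c => b ∣ (m / a) * c) := by
    ext c
    simp only [Finset.mem_filter, Finset.mem_range]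
    constructor
    · rintro ⟨-, h2, h3⟩; exact ⟨h2, h3⟩
    · rintro ⟨h1, h2⟩; exact ⟨lt_of_lt_of_le h1 hbn', h1, h2⟩
  rw [heq, count_c hb0]

lemma divisor_count {d m : ℕ} (hm : 0 < m) (hd : d ∣ m) :
    (m.divisors.filter fun a => d ∣ a).card = (m / d).divisors.card := by
  have hd0 : 0 < d := Nat.pos_of_dvd_of_pos hd hm
  have himg : m.divisors.filter (fun a => d ∣ a) = (m / d).divisors.image (fun e => d * e) := by
    ext x
    simp only [Finset.mem_filter, Finset.mem_image, Nat.mem_divisors]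
    constructor
    · rintro ⟨⟨hxm, -⟩, e, rfl⟩
      refine ⟨e, ⟨?_, ?_⟩, rfl⟩
      · have h1 : d * e ∣ d * (m / d) := by rwa [Nat.mul_div_cancel' hd]
        exact (mul_dvd_mul_iff_left hd0.ne').1 h1
      · exact Nat.div_ne_zero_iff.2 ⟨hd0.ne', Nat.le_of_dvd hm hd⟩
    · rintro ⟨e, ⟨hed, -⟩, rfl⟩
      refine ⟨⟨?_, hm.ne'⟩, ⟨e, rfl⟩⟩
      have := mul_dvd_mul_left d hed
      rwa [Nat.mul_div_cancel' hd] at this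
  rw [himg, Finset.card_image_of_injective _ (mul_right_injective₀ hd0.ne')]

lemma gcd_eq_sum {m n a b : ℕ} (hm : 0 < m) (hn : 0 < n) (ha : a ∣ m) (hb : b ∣ n) :
    Nat.gcd a b = ∑ d ∈ (Nat.gcd m n).divisors, if d ∣ a ∧ d ∣ b then Nat.totient d else 0 := by
  rw [← Finset.sum_filter]
  have ha0 : 0 < a := Nat.pos_of_dvd_of_pos ha hm
  have hb0 : 0 < b := Nat.pos_of_dvd_of_pos hb hn
  have heq : (Nat.gcd m n).divisors.filter (fun d => d ∣ a ∧ d ∣ b) = (Nat.gcd a b).divisors := by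
    ext d
    simp only [Finset.mem_filter, Nat.mem_divisors]
    constructor
    · rintro ⟨-, hda, hdb⟩
      exact ⟨Nat.dvd_gcd hda hdb, Nat.gcd_ne_zero_left ha0.ne'⟩
    · rintro ⟨hdg, -⟩
      have hda := hdg.trans (Nat.gcd_dvd_left a b)
      have hdb := hdg.trans (Nat.gcd_dvd_right a b)
      exact ⟨⟨Nat.dvd_gcd (hda.trans ha) (hdb.trans hb),
        Nat.gcd_ne_zero_left hm.ne'⟩, hda, hdb⟩
  rw [heq, Nat.sum_totient]

lemma sum_identity (m n : ℕ) (hm : 0 < m) (hn : 0 < n) :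
    (∑ a ∈ m.divisors, ∑ b ∈ n.divisors, Nat.gcd (m / a) b) =
      ∑ d ∈ (Nat.gcd m n).divisors,
        Nat.totient d * (m / d).divisors.card * (n / d).divisors.card := by
  rw [Nat.sum_div_divisors m (fun a => ∑ b ∈ n.divisors, Nat.gcd a b)]
  calc ∑ a ∈ m.divisors, ∑ b ∈ n.divisors, Nat.gcd a b
      = ∑ a ∈ m.divisors, ∑ b ∈ n.divisors, ∑ d ∈ (Nat.gcd m n).divisors,
          if d ∣ a ∧ d ∣ b then Nat.totient d else 0 := by
        refine Finset.sum_congr rfl fun a ha => Finset.sum_congr rfl fun b hb => ?_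
        exact gcd_eq_sum hm hn (Nat.dvd_of_mem_divisors ha) (Nat.dvd_of_mem_divisors hb)
    _ = ∑ a ∈ m.divisors, ∑ d ∈ (Nat.gcd m n).divisors, ∑ b ∈ n.divisors,
          if d ∣ a ∧ d ∣ b then Nat.totient d else 0 := by
        exact Finset.sum_congr rfl fun a ha => Finset.sum_comm
    _ = ∑ d ∈ (Nat.gcd m n).divisors, ∑ a ∈ m.divisors, ∑ b ∈ n.divisors,
          if d ∣ a ∧ d ∣ b then Nat.totient d else 0 := Finset.sum_comm
    _ = ∑ d ∈ (Nat.gcd m n).divisors,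
          Nat.totient d * (m / d).divisors.card * (n / d).divisors.card := by
        refine Finset.sum_congr rfl fun d hd => ?_
        have hdm : d ∣ m := (Nat.dvd_of_mem_divisors hd).trans (Nat.gcd_dvd_left m n)
        have hdn : d ∣ n := (Nat.dvd_of_mem_divisors hd).trans (Nat.gcd_dvd_right m n)
        have h1 : ∀ a : ℕ, (∑ b ∈ n.divisors, if d ∣ a ∧ d ∣ b then Nat.totient d else 0)
            = if d ∣ a then (n.divisors.filter fun b => d ∣ b).card * Nat.totient d else 0 := by
          intro a
          by_cases hda : d ∣ a
          · simp only [hda, true_and, if_true]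
            rw [← Finset.sum_filter, Finset.sum_const, smul_eq_mul]
          · simp [hda]
        rw [Finset.sum_congr rfl (fun a _ => h1 a), ← Finset.sum_filter, Finset.sum_const,
          smul_eq_mul, divisor_count hm hdm, divisor_count hn hdn]
        ring

theorem subgroup_count_two' (m n : ℕ) (hm : 0 < m) (hn : 0 < n) :
    Nat.card (AddSubgroup (ZMod m × ZMod n)) =
      ∑ d ∈ (Nat.gcd m n).divisors,
        Nat.totient d * (m / d).divisors.card * (n / d).divisors.card := by
  rw [card_eq_Tset m n hm hn, Tset_card m n hm hn, sum_identity m n hm hn]
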